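/- Let U and Y be real Banach spaces, let S : U × ℝ^K → Y be a continuous linear map, let K̂ ⊆ Y be a closed convex set, and let ζ be a random vector with values in ℝ^K on a probability space (Ω, 𝒜, ℙ). Define φ(u) := ℙ(S(u, ζ) ∈ K̂). Then: (i) for every u ∈ U the set {z ∈ ℝ^K : S(u, z) ∈ K̂} is closed (hence Borel), so φ is well-defined; (ii) φ is weakly sequentially upper semicontinuous, i.e., limsup_m φ(u_m) ≤ φ(ū) whenever u_m ⇀ ū weakly in U; (iii) for every p ∈ [0,1] the feasible set U_pr := {u ∈ U : φ(u) ≥ p} is weakly sequentially closed. -/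
import Mathlib


open MeasureTheory Filter
open scoped ENNReal

/-- Weak sequential convergence in a normed space. -/
def WeakSeqConv {X : Type*} [NormedAddCommGroup X] [NormedSpace ℝ X]
    (x : ℕ → X) (x₀ : X) : Prop :=
  ∀ f : X →L[ℝ] ℝ, Tendsto (fun m => f (x m)) atTop (nhds (f x₀))

/-- A closed convex set is weakly sequentially closed. -/
lemma weakSeqClosed_of_closed_convex {Y : Type*} [NormedAddCommGroup Y] [NormedSpace ℝ Y]
    {Khat : Set Y} (hKcl : IsClosed Khat) (hKconv : Convex ℝ Khat)
    (y : ℕ → Y) (y₀ : Y) (hmem : ∀ m, y m ∈ Khat)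
    (hconv : ∀ g : Y →L[ℝ] ℝ, Tendsto (fun m => g (y m)) atTop (nhds (g y₀))) :
    y₀ ∈ Khat := by
  by_contra h
  obtain ⟨f, c, hfy, hfs⟩ := geometric_hahn_banach_point_closed hKconv hKcl h
  have hev : ∀ᶠ m in atTop, f (y m) < c := (hconv f).eventually (gt_mem_nhds hfy)
  obtain ⟨m, hm⟩ := hev.exists
  exact absurd (hfs (y m) (hmem m)) (not_lt.2 hm.le)

/-- For a continuous linear map `S : U × ℝᴷ → Y`, a closed convex set
`K̂ ⊆ Y` and a random vector `ζ`, the probability function `φ(u) = ℙ(S (u, ζ) ∈ K̂)` is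
well-defined (the sections are closed), weakly sequentially upper semicontinuous, and the
feasible set `{u | φ(u) ≥ p}` is weakly sequentially closed for every `p ∈ [0,1]`. -/
theorem chance_constraint_feasible_set_weakly_seq_closed
    {U Y : Type*} [NormedAddCommGroup U] [NormedSpace ℝ U] [CompleteSpace U]
    [NormedAddCommGroup Y] [NormedSpace ℝ Y] [CompleteSpace Y] {K : ℕ}
    (S : (U × (Fin K → ℝ)) →L[ℝ] Y)
    (Khat : Set Y) (hKcl : IsClosed Khat) (hKconv : Convex ℝ Khat)
    {Ω : Type*} [MeasurableSpace Ω] (P : Measure Ω) [IsProbabilityMeasure P]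
    (ζ : Ω → (Fin K → ℝ)) (hζ : Measurable ζ) :
    (∀ u : U, IsClosed {z : Fin K → ℝ | S (u, z) ∈ Khat}) ∧
    (∀ (ubar : U) (u : ℕ → U), WeakSeqConv u ubar →
      limsup (fun m => P {ω | S (u m, ζ ω) ∈ Khat}) atTop ≤ P {ω | S (ubar, ζ ω) ∈ Khat}) ∧
    (∀ p : ℝ≥0∞, p ≤ 1 → ∀ (u : ℕ → U) (ubar : U),
      (∀ m, p ≤ P {ω | S (u m, ζ ω) ∈ Khat}) → WeakSeqConv u ubar →
      p ≤ P {ω | S (ubar, ζ ω) ∈ Khat}) := by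
  -- closedness of sections
  have hclosed : ∀ u : U, IsClosed {z : Fin K → ℝ | S (u, z) ∈ Khat} := by
    intro u
    have : Continuous fun z : Fin K → ℝ => S (u, z) :=
      S.continuous.comp (Continuous.prodMk_right u)
    exact hKcl.preimage this
  -- weak convergence transfers through S with frozen second argument
  have hweak : ∀ (u : ℕ → U) (ubar : U), WeakSeqConv u ubar → ∀ z : Fin K → ℝ,
      ∀ g : Y →L[ℝ] ℝ,
      Tendsto (fun m => g (S (u m, z))) atTop (nhds (g (S (ubar, z)))) := by
    intro u ubar hu z g
    set T : U →L[ℝ] ℝ := (g.comp S).comp (ContinuousLinearMap.inl ℝ U (Fin K → ℝ)) with hT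
    have hsplit : ∀ v : U, g (S (v, z)) = T v + g (S (0, z)) := by
      intro v
      have : (v, z) = (v, (0 : Fin K → ℝ)) + ((0 : U), z) := by simp
      rw [this, map_add, map_add]
      rfl
    have heq : (fun m => g (S (u m, z))) = fun m => T (u m) + g (S (0, z)) :=
      funext fun m => hsplit (u m)
    rw [heq, hsplit ubar]
    exact (hu T).add tendsto_const_nhds
  -- upper semicontinuity
  have husc : ∀ (ubar : U) (u : ℕ → U), WeakSeqConv u ubar →
      limsup (fun m => P {ω | S (u m, ζ ω) ∈ Khat}) atTop ≤
        P {ω | S (ubar, ζ ω) ∈ Khat} := by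
    intro ubar u hu
    set A : ℕ → Set Ω := fun m => {ω | S (u m, ζ ω) ∈ Khat} with hA
    have hAm : ∀ m, MeasurableSet (A m) := by
      intro m
      exact hζ ((hclosed (u m)).measurableSet)
    set B : ℕ → Set Ω := fun n => ⋃ i, ⋃ _ : n ≤ i, A i with hB
    have hBm : ∀ n, MeasurableSet (B n) := fun n =>
      MeasurableSet.biUnion (Set.to_countable _) fun i _ => hAm i
    have hBanti : Antitone B := fun n m hnm =>
      Set.biUnion_subset_biUnion_left fun i (hi : m ≤ i) => hnm.trans hi
    have hkey : (⋂ n, B n) ⊆ {ω | S (ubar, ζ ω) ∈ Khat} := by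
      intro ω hω
      have hfreq : ∃ᶠ m in atTop, S (u m, ζ ω) ∈ Khat := by
        rw [frequently_atTop]
        intro n
        obtain ⟨i, hi, hiA⟩ := Set.mem_iUnion₂.1 (Set.mem_iInter.1 hω n)
        exact ⟨i, hi, hiA⟩
      obtain ⟨φ, hφmono, hφmem⟩ := extraction_of_frequently_atTop hfreq
      refine weakSeqClosed_of_closed_convex hKcl hKconv
        (fun k => S (u (φ k), ζ ω)) _ hφmem ?_
      intro g
      exact (hweak u ubar hu (ζ ω) g).comp hφmono.tendsto_atTop
    have htend : Tendsto (P ∘ B) atTop (nhds (P (⋂ n, B n))) :=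
      tendsto_measure_iInter_atTop (fun n => (hBm n).nullMeasurableSet) hBanti
        ⟨0, measure_ne_top P _⟩
    have hPBanti : Antitone (P ∘ B) := fun n m h => measure_mono (hBanti h)
    have hiInf : ⨅ n, P (B n) = P (⋂ n, B n) :=
      tendsto_nhds_unique (tendsto_atTop_iInf hPBanti) htend
    calc limsup (fun m => P (A m)) atTop
        = ⨅ n, ⨆ i, ⨆ _ : n ≤ i, P (A i) := limsup_eq_iInf_iSup_of_nat
      _ ≤ ⨅ n, P (B n) := by
          refine iInf_mono fun n => ?_
          exact iSup₂_le fun i hi => measure_mono (Set.subset_biUnion_of_mem hi)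
      _ = P (⋂ n, B n) := hiInf
      _ ≤ P {ω | S (ubar, ζ ω) ∈ Khat} := measure_mono hkey
  refine ⟨hclosed, husc, ?_⟩
  intro p _ u ubar hm hu
  refine le_trans ?_ (husc ubar u hu)
  calc p ≤ ⨅ n, ⨆ i, ⨆ _ : n ≤ i, P {ω | S (u i, ζ ω) ∈ Khat} := by
        refine le_iInf fun n => le_trans (hm n) ?_
        exact le_iSup₂ (f := fun i (_ : n ≤ i) => P {ω | S (u i, ζ ω) ∈ Khat}) n le_rfl
    _ = limsup (fun m => P {ω | S (u m, ζ ω) ∈ Khat}) atTop :=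
        limsup_eq_iInf_iSup_of_nat.symm
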